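/- arXiv:0810.5421 — 3 statements merged into one kernel-verified Lean document; each statement's English description precedes it below -/
import Mathlib

section
/- For every β ∈ ℤ, Σ_{γ∈ℤ} D₁(γ)·ψ₁(h(β − γ)) equals 1 if β = 0 and equals 0 if β ≠ 0 (the sum has only finitely many nonzero terms). That is, D₁ is the discrete analogue of the differential operator d²/dx² − 1 on the grid {hβ}, satisfying D₁ * ψ₁ = δ. -/
/-- `ψ₁(x) = (sign x)/2 · (eˣ − e⁻ˣ)/2`, with `sign 0 = 0`. -/
noncomputable def psi1 (x : ℝ) : ℝ :=
  Real.sign x / 2 * ((Real.exp x - Real.exp (-x)) / 2)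

/-- The discrete operator `D₁`: `D₁(0) = 2(1+e^{2h})/(1−e^{2h})`,
`D₁(β) = −2e^h/(1−e^{2h})` for `|β| = 1`, and `D₁(β) = 0` for `|β| ≥ 2`. -/
noncomputable def D1 (h : ℝ) (β : ℤ) : ℝ :=
  if β = 0 then 2 * (1 + Real.exp (2 * h)) / (1 - Real.exp (2 * h))
  else if β.natAbs = 1 then -2 * Real.exp h / (1 - Real.exp (2 * h))
  else 0

lemma psi1_neg (x : ℝ) : psi1 (-x) = psi1 x := by
  simp only [psi1, Real.sign_neg, neg_neg]
  ring

lemma psi1_of_nonneg {x : ℝ} (hx : 0 ≤ x) :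
    psi1 x = (Real.exp x - Real.exp (-x)) / 4 := by
  rcases hx.eq_or_lt with h | h
  · simp [psi1, ← h]
  · rw [psi1, Real.sign_of_pos h]; ring

lemma one_lt_exp_two_h {h : ℝ} (hh : 0 < h) : (1:ℝ) < Real.exp (2 * h) := by
  nlinarith [Real.add_one_le_exp (2 * h)]

lemma key (h : ℝ) (hh : 0 < h) (x : ℝ) (hx : h ≤ x) :
    D1 h 0 * psi1 x + D1 h 1 * psi1 (x - h) + D1 h 1 * psi1 (x + h) = 0 := by
  have h1 := one_lt_exp_two_h hh
  have hne : 1 - Real.exp (2 * h) ≠ 0 := by linarith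
  have hE := Real.exp_ne_zero h
  have hX := Real.exp_ne_zero x
  rw [psi1_of_nonneg (by linarith), psi1_of_nonneg (by linarith),
    psi1_of_nonneg (by linarith)]
  simp only [D1, if_pos rfl, if_neg (by norm_num : (1:ℤ) ≠ 0), Int.natAbs_one, if_pos rfl, ↓reduceIte]
  rw [show (2:ℝ) * h = h + h by ring] at hne ⊢
  rw [Real.exp_add] at hne
  simp only [Real.exp_add, neg_sub, neg_add_rev, Real.exp_sub, Real.exp_neg]
  have h2 : Real.exp h * Real.exp h ≠ 1 := fun hc => hne (by rw [hc]; ring)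
  field_simp
  ring

lemma key0 (h : ℝ) (hh : 0 < h) : D1 h 1 * psi1 h + D1 h 1 * psi1 h = 1 := by
  have h1 := one_lt_exp_two_h hh
  have hne : 1 - Real.exp (2 * h) ≠ 0 := by linarith
  have hE := Real.exp_ne_zero h
  rw [psi1_of_nonneg hh.le]
  simp only [D1, if_neg (by norm_num : (1:ℤ) ≠ 0), Int.natAbs_one, if_pos rfl, ↓reduceIte]
  rw [show (2:ℝ) * h = h + h by ring] at hne ⊢
  rw [Real.exp_add] at hne ⊢
  rw [Real.exp_neg]
  have h2 : Real.exp h * Real.exp h ≠ 1 := fun hc => hne (by rw [hc]; ring)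
  have h3 : 1 - Real.exp h ^ 2 ≠ 0 := by rw [sq]; exact hne
  field_simp
  ring

lemma D1_eq_zero {h : ℝ} {γ : ℤ} (h1 : γ ≠ -1) (h2 : γ ≠ 0) (h3 : γ ≠ 1) :
    D1 h γ = 0 := by
  rw [D1, if_neg h2, if_neg (by omega)]


/-- `D₁` is the discrete analogue of `d²/dx² − 1` on the grid `{hβ}`:
`D₁ * ψ₁ = δ` (the sum has only finitely many nonzero terms). -/
theorem D1_conv_psi1_eq_delta (N : ℕ) (hN : 1 ≤ N) (h : ℝ) (hh : h = 1 / N) (β : ℤ) :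
    (Function.support fun γ : ℤ => D1 h γ * psi1 (h * (β - γ))).Finite ∧
    ∑' γ : ℤ, D1 h γ * psi1 (h * (β - γ)) = if β = 0 then 1 else 0 := by
  have hN0 : (0:ℝ) < N := by exact_mod_cast hN
  have hh0 : 0 < h := by rw [hh]; positivity
  have hsupp : ∀ γ : ℤ, γ ∉ ({-1, 0, 1} : Finset ℤ) →
      D1 h γ * psi1 (h * (β - γ)) = 0 := by
    intro γ hγ
    simp only [Finset.mem_insert, Finset.mem_singleton, not_or] at hγ
    rw [D1_eq_zero hγ.1 hγ.2.1 hγ.2.2, zero_mul]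
  constructor
  · apply Set.Finite.subset ({-1, 0, 1} : Finset ℤ).finite_toSet
    intro γ hγ
    by_contra hc
    exact hγ (hsupp γ (by simpa using hc))
  · rw [tsum_eq_sum hsupp]
    rw [show ({-1, 0, 1} : Finset ℤ) = insert (-1) (insert 0 {1}) from rfl,
      Finset.sum_insert (by decide), Finset.sum_insert (by decide),
      Finset.sum_singleton]
    push_cast
    have hD : D1 h (-1) = D1 h 1 := by simp [D1]
    rcases lt_trichotomy β 0 with hb | hb | hb
    · rw [if_neg hb.ne]
      have hb1 : (1:ℝ) ≤ -(β:ℝ) := by exact_mod_cast (by omega : (1:ℤ) ≤ -β)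
      have e1 : h * ((β:ℝ) - -1) = -(h * (-(β:ℝ)) - h) := by ring
      have e2 : h * ((β:ℝ) - 0) = -(h * (-(β:ℝ))) := by ring
      have e3 : h * ((β:ℝ) - 1) = -(h * (-(β:ℝ)) + h) := by ring
      rw [e1, e2, e3, psi1_neg, psi1_neg, psi1_neg, hD]
      have := key h hh0 (h * (-(β:ℝ))) (by nlinarith)
      linarith
    · subst hb
      simp only [Int.cast_zero]
      rw [if_true, hD]
      have e1 : h * ((0:ℝ) - -1) = h := by ring
      have e2 : h * ((0:ℝ) - 0) = 0 := by ring
      have e3 : h * ((0:ℝ) - 1) = -h := by ring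
      rw [e1, e2, e3, psi1_neg]
      have : psi1 0 = 0 := by simp [psi1]
      rw [this]
      have := key0 h hh0
      linarith
    · rw [if_neg hb.ne']
      have hb1 : (1:ℝ) ≤ (β:ℝ) := by exact_mod_cast hb
      have e1 : h * ((β:ℝ) - -1) = h * (β:ℝ) + h := by ring
      have e2 : h * ((β:ℝ) - 0) = h * (β:ℝ) := by ring
      have e3 : h * ((β:ℝ) - 1) = h * (β:ℝ) - h := by ring
      rw [e1, e2, e3, hD]
      have := key h hh0 (h * (β:ℝ)) (by nlinarith)
      linarith
end

section
/- Σ_{β=0}^N C(β)·e^{−hβ} = 1 − e^{−1}; that is, the quadrature formula ∫₀¹ φ(x) dx ≈ Σ_{β=0}^N C(β)·φ(hβ) with these coefficients is exact for the function φ(x) = e^{−x}. -/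
/-- The quadrature formula with coefficients `C(0) = C(N) = (e^h − 1)/(e^h + 1)` and
`C(β) = 2(e^h − 1)/(e^h + 1)` for `1 ≤ β ≤ N − 1`, at the nodes `hβ`, is exact for
the function `φ(x) = e^{−x}`: `Σ_{β=0}^N C(β)·e^{−hβ} = 1 − e^{−1}`. -/
theorem quadrature_W1_exact_exp_neg (N : ℕ) (hN : 1 ≤ N) (h : ℝ) (hh : h = 1 / N)
    (C : ℕ → ℝ)
    (hC0 : C 0 = (Real.exp h - 1) / (Real.exp h + 1))
    (hCN : C N = (Real.exp h - 1) / (Real.exp h + 1))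
    (hCmid : ∀ β : ℕ, 1 ≤ β → β ≤ N - 1 → C β = 2 * (Real.exp h - 1) / (Real.exp h + 1)) :
    ∑ β ∈ Finset.range (N + 1), C β * Real.exp (-(h * β)) = 1 - Real.exp (-1) := by
  have hNne : (N : ℝ) ≠ 0 := Nat.cast_ne_zero.mpr (by omega)
  set a := (Real.exp h - 1) / (Real.exp h + 1) with ha
  set g : ℕ → ℝ := fun β => Real.exp (-(h * β)) with hg
  have hEpos : (0:ℝ) < Real.exp h := Real.exp_pos h
  have hE1 : Real.exp h + 1 ≠ 0 := by positivity
  have hEne : Real.exp h ≠ 0 := ne_of_gt hEpos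
  -- key algebraic step : a*(g β + g (β+1)) = g β - g (β+1)
  have hstep : ∀ β : ℕ, g β - g (β + 1) = a * g β + a * g (β + 1) := by
    intro β
    have h1 : g (β + 1) = g β * Real.exp (-h) := by
      simp only [hg]
      rw [← Real.exp_add]
      congr 1
      push_cast
      ring
    have h2 : Real.exp (-h) = 1 / Real.exp h := by
      rw [Real.exp_neg]; ring
    rw [h1, h2, ha]
    field_simp
  -- rewrite each summand
  have key : ∀ β ∈ Finset.range (N + 1),
      C β * g β = 2 * a * g β - (if β = 0 then a * g 0 else 0)
        - (if β = N then a * g N else 0) := by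
    intro β hβ
    have hβ' : β ≤ N := by
      have := Finset.mem_range.mp hβ; omega
    rcases eq_or_ne β 0 with rfl | h0
    · have hN0 : (0:ℕ) ≠ N := by omega
      rw [hC0, if_pos rfl, if_neg hN0]
      ring
    · rcases eq_or_ne β N with rfl | hN'
      · rw [hCN, if_neg h0, if_pos rfl]
        ring
      · rw [hCmid β (by omega) (by omega), if_neg h0, if_neg hN']
        rw [ha]
        ring
  rw [Finset.sum_congr rfl key]
  rw [Finset.sum_sub_distrib, Finset.sum_sub_distrib]
  rw [Finset.sum_ite_eq' (Finset.range (N+1)) 0 (fun _ => a * g 0)]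
  rw [Finset.sum_ite_eq' (Finset.range (N+1)) N (fun _ => a * g N)]
  rw [if_pos (Finset.mem_range.mpr (by omega)), if_pos (Finset.mem_range.mpr (by omega))]
  have tele : ∑ β ∈ Finset.range N, (g β - g (β + 1)) = g 0 - g N :=
    Finset.sum_range_sub' g N
  rw [Finset.sum_congr rfl (fun β _ => hstep β)] at tele
  rw [Finset.sum_add_distrib] at tele
  have e1 : ∑ β ∈ Finset.range N, a * g (β + 1)
      = (∑ β ∈ Finset.range (N + 1), a * g β) - a * g 0 := by
    rw [Finset.sum_range_succ' (fun β => a * g β) N]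
    ring
  have e2 : ∑ β ∈ Finset.range N, a * g β
      = (∑ β ∈ Finset.range (N + 1), a * g β) - a * g N := by
    rw [Finset.sum_range_succ (fun β => a * g β) N]
    ring
  rw [e1, e2] at tele
  have hS : ∑ β ∈ Finset.range (N + 1), 2 * a * g β
      = 2 * ∑ β ∈ Finset.range (N + 1), a * g β := by
    rw [Finset.mul_sum]
    exact Finset.sum_congr rfl (fun β _ => by ring)
  rw [hS]
  have hg0 : g 0 = 1 := by simp [hg]
  have hgN : g N = Real.exp (-1) := by
    simp only [hg]
    congr 1
    rw [hh]
    field_simp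
  rw [hg0, hgN] at tele ⊢
  linarith [tele]
end

section
/- For every β ∈ {0, 1, …, N}, Σ_{γ=0}^N C(γ)·ψ₁(hβ − hγ) = f₁(hβ); that is, the coefficients C solve the Wiener–Hopf type system for the optimal quadrature formula in W₂^{(1,0)}(0,1) with Lagrange multiplier d = 0. -/
/-- `f₁(t) = (e^t + e^{−t} + e^{1−t} + e^{t−1} − 4)/4`. -/
noncomputable def f1 (t : ℝ) : ℝ :=
  (Real.exp t + Real.exp (-t) + Real.exp (1 - t) + Real.exp (t - 1) - 4) / 4

/-- key telescoping identity -/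
lemma keyG (h : ℝ) (hpos : 0 < h) (k : ℕ) :
    (Real.exp h - 1) / (Real.exp h + 1) *
      (2 * ∑ m ∈ Finset.range k, psi1 (h * m) + psi1 (h * k)) =
    (Real.exp (h * k) + Real.exp (-(h * k)) - 2) / 4 := by
  induction k with
  | zero => norm_num [psi1]
  | succ k ih =>
    have hE : Real.exp h + 1 ≠ 0 := by positivity
    have hx : Real.exp (h * k) ≠ 0 := Real.exp_ne_zero _
    have hEx : Real.exp h ≠ 0 := Real.exp_ne_zero _
    have hk1 : ((k + 1 : ℕ) : ℝ) = (k : ℝ) + 1 := by push_cast; ring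
    have e1 : Real.exp (h * ((k : ℝ) + 1)) = Real.exp (h * k) * Real.exp h := by
      rw [← Real.exp_add]; ring_nf
    have q1 : psi1 (h * ((k + 1 : ℕ) : ℝ)) =
        (Real.exp (h * k) * Real.exp h - (Real.exp (h * k) * Real.exp h)⁻¹) / 4 := by
      rw [hk1, psi1_of_nonneg (by positivity), e1, Real.exp_neg, e1]
    have q2 : psi1 (h * (k : ℝ)) =
        (Real.exp (h * k) - (Real.exp (h * k))⁻¹) / 4 := by
      rw [psi1_of_nonneg (by positivity), Real.exp_neg]
    have g2 : Real.exp (-(h * (k : ℝ))) = (Real.exp (h * k))⁻¹ := Real.exp_neg _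
    rw [Finset.sum_range_succ, q1, q2]
    rw [q2, g2] at ih
    have g1 : Real.exp (h * ((k + 1 : ℕ) : ℝ)) = Real.exp (h * k) * Real.exp h := by
      rw [hk1, e1]
    have g3 : Real.exp (-(h * ((k + 1 : ℕ) : ℝ))) =
        (Real.exp (h * k) * Real.exp h)⁻¹ := by
      rw [Real.exp_neg, g1]
    rw [g1, g3]
    have step : (Real.exp h - 1) / (Real.exp h + 1) *
        ((Real.exp (h * k) - (Real.exp (h * k))⁻¹) / 4 +
          (Real.exp (h * k) * Real.exp h - (Real.exp (h * k) * Real.exp h)⁻¹) / 4) =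
        (Real.exp (h * k) * Real.exp h + (Real.exp (h * k) * Real.exp h)⁻¹ - 2) / 4 -
        (Real.exp (h * k) + (Real.exp (h * k))⁻¹ - 2) / 4 := by
      field_simp
      ring
    linear_combination ih + step

/-- The coefficients `C(0) = C(N) = (e^h − 1)/(e^h + 1)`,
`C(β) = 2(e^h − 1)/(e^h + 1)` for `1 ≤ β ≤ N − 1`, solve the Wiener–Hopf type
system for the optimal quadrature formula in `W₂^{(1,0)}(0,1)` with Lagrange
multiplier `d = 0`: for every `β ∈ {0,…,N}`,
`Σ_{γ=0}^N C(γ)·ψ₁(hβ − hγ) = f₁(hβ)`. -/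
theorem quadrature_W1_wiener_hopf (N : ℕ) (hN : 1 ≤ N) (h : ℝ) (hh : h = 1 / N)
    (C : ℕ → ℝ)
    (hC0 : C 0 = (Real.exp h - 1) / (Real.exp h + 1))
    (hCN : C N = (Real.exp h - 1) / (Real.exp h + 1))
    (hCmid : ∀ β : ℕ, 1 ≤ β → β ≤ N - 1 → C β = 2 * (Real.exp h - 1) / (Real.exp h + 1)) :
    ∀ β : ℕ, β ≤ N →
      ∑ γ ∈ Finset.range (N + 1), C γ * psi1 (h * β - h * γ) = f1 (h * β) := by
  intro β hβ
  have hNr : (0 : ℝ) < (N : ℝ) := by exact_mod_cast Nat.pos_of_ne_zero (by omega)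
  have hpos : 0 < h := by rw [hh]; positivity
  have hN1 : h * (N : ℝ) = 1 := by rw [hh]; field_simp
  set a := (Real.exp h - 1) / (Real.exp h + 1) with ha
  have c1 : ((N - β : ℕ) : ℝ) = (N : ℝ) - (β : ℝ) := by
    push_cast [Nat.cast_sub hβ]; ring
  -- Step 1: pull out the endpoint corrections
  have expand : ∑ γ ∈ Finset.range (N + 1), C γ * psi1 (h * β - h * γ) =
      (∑ γ ∈ Finset.range (N + 1), (C γ - 2 * a) * psi1 (h * β - h * γ)) +
        2 * a * ∑ γ ∈ Finset.range (N + 1), psi1 (h * β - h * γ) := by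
    rw [Finset.mul_sum, ← Finset.sum_add_distrib]
    exact Finset.sum_congr rfl (fun γ _ => by ring)
  have corr : ∑ γ ∈ Finset.range (N + 1), (C γ - 2 * a) * psi1 (h * β - h * γ) =
      (C 0 - 2 * a) * psi1 (h * β - h * 0) + (C N - 2 * a) * psi1 (h * β - h * N) := by
    rw [← Finset.sum_subset (s₁ := ({0, N} : Finset ℕ))
        (by intro x hx; simp only [Finset.mem_insert, Finset.mem_singleton] at hx
            rcases hx with rfl | rfl <;> simp [Finset.mem_range] <;> omega)
        (by intro x hx hx'
            simp only [Finset.mem_range] at hx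
            simp only [Finset.mem_insert, Finset.mem_singleton, not_or] at hx'
            rw [hCmid x (by omega) (by omega), ha]
            ring)]
    rw [Finset.sum_pair (by omega : (0 : ℕ) ≠ N)]
    push_cast
    ring_nf
  -- Step 2: reindex the plain psi1 sum
  have reindex : ∑ γ ∈ Finset.range (N + 1), psi1 (h * β - h * γ) =
      (∑ m ∈ Finset.range (β + 1), psi1 (h * m)) +
        ∑ m ∈ Finset.range (N - β + 1), psi1 (h * m) := by
    have hsplitN : N + 1 = (β + 1) + (N - β) := by omega
    rw [hsplitN, Finset.sum_range_add]
    congr 1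
    · rw [← Finset.sum_range_reflect (fun m => psi1 (h * m)) (β + 1)]
      refine Finset.sum_congr rfl (fun γ hγ => ?_)
      simp only [Finset.mem_range] at hγ
      congr 1
      rw [Nat.add_sub_cancel, Nat.cast_sub (by omega : γ ≤ β)]
      ring
    · rw [Finset.sum_range_succ' (fun m => psi1 (h * m)) (N - β)]
      have h0 : psi1 (h * (0 : ℕ)) = 0 := by simp [psi1]
      rw [h0, add_zero]
      refine Finset.sum_congr rfl (fun i hi => ?_)
      have : h * (β : ℝ) - h * ((β + 1 + i : ℕ) : ℝ) = -(h * ((i + 1 : ℕ) : ℝ)) := by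
        push_cast; ring
      rw [this, psi1_neg]
  -- Step 3: assemble
  have K1 := keyG h hpos β
  have K2 := keyG h hpos (N - β)
  rw [← ha] at K1 K2
  rw [expand, corr, reindex, hC0, hCN]
  rw [Finset.sum_range_succ, Finset.sum_range_succ]
  have e5 : h * (β : ℝ) - h * (N : ℝ) = -(h * ((N - β : ℕ) : ℝ)) := by
    rw [c1]; ring
  rw [e5, psi1_neg, mul_zero, sub_zero]
  have f1eq : f1 (h * β) =
      (Real.exp (h * β) + Real.exp (-(h * β)) - 2) / 4 +
        (Real.exp (h * ((N - β : ℕ) : ℝ)) + Real.exp (-(h * ((N - β : ℕ) : ℝ))) - 2) / 4 := by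
    have e7 : (1 : ℝ) - h * β = h * ((N - β : ℕ) : ℝ) := by rw [c1, ← hN1]; ring
    have e8 : h * (β : ℝ) - 1 = -(h * ((N - β : ℕ) : ℝ)) := by rw [c1, ← hN1]; ring
    rw [f1, e7, e8]; ring
  rw [f1eq]
  linear_combination K1 + K2
end
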